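/- The expected number of draws without replacement from an urn with M balls (K green) until obtaining k green balls equals k * (M+1) / (K+1). -/

import Mathlib

open Finset

/-- Upper Vandermonde: `∑_{v=0}^{n} C(v,k) C(n-v,l) = C(n+1, k+l+1)`. -/
lemma upper_vdm : ∀ n k l : ℕ,
    ∑ v ∈ Finset.range (n + 1), v.choose k * (n - v).choose l = (n + 1).choose (k + l + 1) := by
  intro n
  induction n with
  | zero =>
    intro k l
    rw [Finset.sum_range_one]
    rcases Nat.eq_zero_or_pos (k + l) with h | h
    · have hk0 : k = 0 := by omega
      have hl0 : l = 0 := by omega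
      simp [hk0, hl0]
    · rw [Nat.choose_eq_zero_of_lt (by omega : 1 < k + l + 1)]
      rcases Nat.eq_zero_or_pos k with hk0 | hk0
      · rw [Nat.choose_eq_zero_of_lt (show 0 < l by omega), Nat.mul_zero]
      · rw [Nat.choose_eq_zero_of_lt hk0, Nat.zero_mul]
  | succ n ih =>
    intro k l
    rcases Nat.eq_zero_or_pos l with hl | hl
    · subst hl
      simp only [Nat.choose_zero_right, Nat.mul_one]
      have : ∑ v ∈ Finset.range (n + 2), v.choose k
          = ∑ v ∈ Finset.Icc k (n + 1), v.choose k := by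
        rw [Finset.range_eq_Ico]
        rcases le_or_gt k (n + 1) with h | h
        · rw [show Finset.Icc k (n+1) = Finset.Ico k (n+2) by rw [← Finset.Ico_add_one_right_eq_Icc]; rfl,
            ← Finset.sum_Ico_consecutive _ (Nat.zero_le k) (by omega)]
          have : ∑ v ∈ Finset.Ico 0 k, v.choose k = 0 :=
            Finset.sum_eq_zero fun v hv => Nat.choose_eq_zero_of_lt (Finset.mem_Ico.mp hv).2
          omega
        · rw [Finset.Icc_eq_empty_of_lt h, Finset.sum_empty]
          exact Finset.sum_eq_zero fun v hv =>
            Nat.choose_eq_zero_of_lt (by have := Finset.mem_Ico.mp hv; omega)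
      rw [this, Nat.sum_Icc_choose]
    · obtain ⟨m, rfl⟩ := Nat.exists_eq_succ_of_ne_zero (Nat.pos_iff_ne_zero.mp hl)
      simp only [Nat.succ_eq_add_one]
      rw [Finset.sum_range_succ]
      have hsplit : ∀ v ∈ Finset.range (n + 1),
          v.choose k * (n + 1 - v).choose (m + 1)
            = v.choose k * (n - v).choose (m + 1) + v.choose k * (n - v).choose m := by
        intro v hv
        have hv' : v ≤ n := by have := Finset.mem_range.mp hv; omega
        have : n + 1 - v = (n - v) + 1 := by omega
        rw [this, Nat.choose_succ_succ ((n-v)), Nat.mul_add, Nat.add_comm]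
      rw [Finset.sum_congr rfl hsplit, Finset.sum_add_distrib, ih k (m + 1), ih k m]
      have h0 : (n + 1 - (n + 1)).choose (m + 1) = 0 := by simp
      rw [h0, Nat.mul_zero, Nat.add_zero]
      have : k + (m + 1) + 1 = (k + m + 1) + 1 := by omega
      rw [this, Nat.choose_succ_succ (n + 1)]
      simp only [Nat.succ_eq_add_one]
      omega

theorem stmt3 (M K k : ℕ) (hk : 1 ≤ k) (hkK : k ≤ K) (hKM : K ≤ M) :
    ∑ v ∈ Finset.Icc 1 M,
        (v : ℝ) * (((v - 1).choose (k - 1) * (M - v).choose (K - k) : ℕ) / (M.choose K : ℝ)) =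
      k * (M + 1) / (K + 1) := by
  -- key natural number identity for each term
  have hterm : ∀ v, 1 ≤ v → v * ((v - 1).choose (k - 1) * (M - v).choose (K - k))
      = k * (v.choose k * (M - v).choose (K - k)) := by
    intro v hv
    obtain ⟨w, rfl⟩ := Nat.exists_eq_add_of_le hv
    obtain ⟨j, rfl⟩ := Nat.exists_eq_add_of_le hk
    have := Nat.add_one_mul_choose_eq w j
    -- (w+1) * C(w,j) = C(w+1,j+1)*(j+1)
    rw [show 1 + w - 1 = w by omega, show 1 + j - 1 = j by omega,
      show (1 + w) = w + 1 by omega, show (1 + j) = j + 1 by omega]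
    rw [← Nat.mul_assoc, this]
    ring
  -- sum identity in ℕ
  have hsum : ∑ v ∈ Finset.Icc 1 M, v * ((v - 1).choose (k - 1) * (M - v).choose (K - k))
      = k * (M + 1).choose (K + 1) := by
    rw [Finset.sum_congr rfl (fun v hv => hterm v (Finset.mem_Icc.mp hv).1)]
    rw [← Finset.mul_sum]
    congr 1
    have : ∑ v ∈ Finset.Icc 1 M, v.choose k * (M - v).choose (K - k)
        = ∑ v ∈ Finset.range (M + 1), v.choose k * (M - v).choose (K - k) := by
      rw [Finset.range_eq_Ico, show Finset.Icc 1 M = Finset.Ico 1 (M+1) by rw [Finset.Ico_add_one_right_eq_Icc],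
        ← Finset.sum_Ico_consecutive _ (Nat.zero_le 1) (by omega)]
      simp [Nat.choose_eq_zero_of_lt hk]
    rw [this, upper_vdm M k (K - k), show k + (K - k) + 1 = K + 1 by omega]
  -- pass to ℝ
  have hMK : (0 : ℝ) < (M.choose K : ℝ) := by
    exact_mod_cast Nat.choose_pos hKM
  have hK1 : (0 : ℝ) < (K : ℝ) + 1 := by positivity
  have key : (K + 1) * (M + 1).choose (K + 1) = (M + 1) * M.choose K := by
    have h := Nat.add_one_mul_choose_eq M K
    simpa [Nat.succ_eq_add_one, Nat.mul_comm] using h.symm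
  have : ∑ v ∈ Finset.Icc 1 M,
        (v : ℝ) * (((v - 1).choose (k - 1) * (M - v).choose (K - k) : ℕ) / (M.choose K : ℝ))
      = (↑(∑ v ∈ Finset.Icc 1 M, v * ((v - 1).choose (k - 1) * (M - v).choose (K - k))) : ℝ)
        / (M.choose K : ℝ) := by
    rw [Nat.cast_sum, Finset.sum_div]
    exact Finset.sum_congr rfl fun v hv => by push_cast; ring
  rw [this, hsum]
  have keyR : ((K : ℝ) + 1) * ((M + 1).choose (K + 1) : ℝ) = ((M : ℝ) + 1) * (M.choose K : ℝ) := by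
    exact_mod_cast key
  rw [div_eq_div_iff hMK.ne' hK1.ne']
  push_cast
  linear_combination (k:ℝ) * keyR
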